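/- Let Γ be a countable amenable group. Let Γ ↷ X be an expansive action with the weak specification property on a compact metrizable space X, and let Γ ↷ Y be an expansive factor of Γ ↷ X with factor map T: X → Y, such that h_top(Y) < h_top(X). Then for every homoclinic equivalence class Ξ of X, the map T fails to be injective on Ξ. -/
import Mathlib


open Filter Topology MeasureTheory
open scoped symmDiff

namespace GOE

/-- The action of `Γ` on `X` is continuous (each group element acts continuously). -/
def ContAction (Γ X : Type*) [Group Γ] [TopologicalSpace X] [MulAction Γ X] : Prop :=
  ∀ s : Γ, Continuous fun x : X => s • x

/-- The weak specification property with respect to the metric on `X`. -/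
def WeakSpec (Γ X : Type*) [Group Γ] [MetricSpace X] [MulAction Γ X] : Prop :=
  ∀ ε : ℝ, 0 < ε → ∃ F : Finset Γ, F.Nonempty ∧ (∀ s ∈ F, s⁻¹ ∈ F) ∧
    ∀ (J : Type) (_ : Fintype J) (Fj : J → Finset Γ),
      (∀ i j : J, i ≠ j → ∀ f ∈ F, ∀ s ∈ Fj i, f * s ∉ Fj j) →
      ∀ xj : J → X, ∃ x : X, ∀ j : J, ∀ s ∈ Fj j, dist (s • x) (s • xj j) ≤ ε

/-- Expansiveness of the action with respect to the metric on `X`. -/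
def Expansive (Γ X : Type*) [Group Γ] [MetricSpace X] [MulAction Γ X] : Prop :=
  ∃ κ : ℝ, 0 < κ ∧ ∀ x y : X, x ≠ y → ∃ s : Γ, κ < dist (s • x) (s • y)

/-- `(x, y)` is a homoclinic pair: `dist (s • x) (s • y) → 0` as `s → ∞` in `Γ`. -/
def Homoclinic (Γ : Type*) {X : Type*} [Group Γ] [MetricSpace X] [MulAction Γ X]
    (x y : X) : Prop :=
  ∀ ε : ℝ, 0 < ε → ∃ E : Finset Γ, ∀ s : Γ, s ∉ E → dist (s • x) (s • y) < ε

/-- `T` is pre-injective: injective on each homoclinic equivalence class. -/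
def PreInjective (Γ : Type*) {X Y : Type*} [Group Γ] [MetricSpace X] [MulAction Γ X]
    (T : X → Y) : Prop :=
  ∀ x y : X, Homoclinic Γ x y → T x = T y → x = y

/-- `F` is a left Følner sequence for `Γ`. -/
def IsFolner (Γ : Type*) [Group Γ] (F : ℕ → Finset Γ) : Prop :=
  letI := Classical.decEq Γ
  (∀ n, (F n).Nonempty) ∧
  ∀ K : Finset Γ, K.Nonempty →
    Tendsto (fun n =>
        ((((K.biUnion fun k => (F n).image fun t => k * t) ∆ (F n)).card : ℝ) / (F n).card))
      atTop (𝓝 0)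

/-- The minimal number of members of the cover `⋁_{s ∈ E} s⁻¹ U` needed to cover `Z`. -/
noncomputable def covNumOn (Γ X : Type*) [Group Γ] [TopologicalSpace X] [MulAction Γ X]
    (Z : Set X) (U : Finset (Set X)) (E : Finset Γ) : ℕ :=
  sInf {n : ℕ | ∃ c : Finset (Γ → Set X), c.card = n ∧ (∀ f ∈ c, ∀ s : Γ, f s ∈ U) ∧
    Z ⊆ ⋃ f ∈ c, ⋂ s ∈ E, (fun x : X => s • x) ⁻¹' f s}

/-- Topological entropy of the restriction of the action to the invariant set `Z`,
computed along the Følner sequence `F` via open covers. -/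
noncomputable def topEntOn (Γ X : Type*) [Group Γ] [TopologicalSpace X] [MulAction Γ X]
    (Z : Set X) (F : ℕ → Finset Γ) : EReal :=
  ⨆ (U : Finset (Set X)) (_ : (∀ V ∈ U, IsOpen V) ∧ Z ⊆ ⋃₀ (↑U : Set (Set X))),
    Filter.limsup
      (fun n => ((Real.log (covNumOn Γ X Z U (F n)) / (F n).card : ℝ) : EReal)) Filter.atTop

/-- Maximal cardinality of a `(ρ_E, ε)`-separated subset of `Z`. -/
noncomputable def sepNum (Γ X : Type*) [Group Γ] [MetricSpace X] [MulAction Γ X]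
    (Z : Set X) (E : Finset Γ) (ε : ℝ) : ℕ :=
  sSup {n : ℕ | ∃ W : Finset X, (↑W : Set X) ⊆ Z ∧ W.card = n ∧
    ∀ x ∈ W, ∀ y ∈ W, x ≠ y → ∃ s ∈ E, ε ≤ dist (s • x) (s • y)}

/-- Minimal cardinality of a `(ρ_E, ε)`-spanning subset of `Z`. -/
noncomputable def spnNum (Γ X : Type*) [Group Γ] [MetricSpace X] [MulAction Γ X]
    (Z : Set X) (E : Finset Γ) (ε : ℝ) : ℕ :=
  sInf {n : ℕ | ∃ W : Finset X, (↑W : Set X) ⊆ Z ∧ W.card = n ∧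
    ∀ x ∈ Z, ∃ w ∈ W, ∀ s ∈ E, dist (s • x) (s • w) < ε}

/-- Shannon entropy of a finite family of Borel sets. -/
noncomputable def shannonH {X : Type*} [MeasurableSpace X] (μ : Measure X)
    (P : Finset (Set X)) : ℝ :=
  ∑ A ∈ P, -((μ A).toReal * Real.log (μ A).toReal)

/-- The join `⋁_{s ∈ E} s⁻¹ P` of the partition `P`. -/
noncomputable def joinPart (Γ X : Type*) [Group Γ] [MulAction Γ X]
    (P : Finset (Set X)) (E : Finset Γ) : Finset (Set X) :=
  letI := Classical.decEq Γ
  letI := Classical.decEq (Set X)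
  (E.pi fun _ => P).image fun f => ⋂ s, ⋂ (h : s ∈ E), (fun x : X => s • x) ⁻¹' f s h

/-- Dynamical entropy of the partition `P` along the Følner sequence `F`. -/
noncomputable def dynEnt (Γ X : Type*) [Group Γ] [MulAction Γ X] [MeasurableSpace X]
    (μ : Measure X) (P : Finset (Set X)) (F : ℕ → Finset Γ) : ℝ :=
  Filter.limsup (fun n => shannonH μ (joinPart Γ X P (F n)) / (F n).card) Filter.atTop

/-- `P` is a finite Borel partition of `X`. -/
def IsBorelPartition {X : Type*} [MeasurableSpace X] (P : Finset (Set X)) : Prop :=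
  (∀ A ∈ P, MeasurableSet A) ∧ (∀ A ∈ P, ∀ B ∈ P, A ≠ B → Disjoint A B) ∧
    ⋃₀ (↑P : Set (Set X)) = Set.univ

/-- Completely positive entropy of `Γ ↷ (X, μ)` along the Følner sequence `F`. -/
def HasCPE (Γ X : Type*) [Group Γ] [MulAction Γ X] [MeasurableSpace X]
    (μ : Measure X) (F : ℕ → Finset Γ) : Prop :=
  ∀ P : Finset (Set X), IsBorelPartition P → 0 < shannonH μ P → 0 < dynEnt Γ X μ P F

/-- `K'` is an independence set for the tuple `D` of subsets of `X`. -/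
def IsIndepSet (Γ X : Type*) [Group Γ] [MulAction Γ X] {k : ℕ}
    (D : Fin k → Set X) (K' : Finset Γ) : Prop :=
  ∀ ω : Γ → Fin k, ∃ x : X, ∀ s ∈ K', s • x ∈ D (ω s)

/-- The independence density of the tuple `D`. -/
noncomputable def indepDensity (Γ X : Type*) [Group Γ] [MulAction Γ X] {k : ℕ}
    (D : Fin k → Set X) : ℝ :=
  sInf {r : ℝ | ∃ K : Finset Γ, K.Nonempty ∧
    r = ((sSup {n : ℕ | ∃ K' ⊆ K, K'.card = n ∧ IsIndepSet Γ X D K'} : ℕ) : ℝ) / K.card}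

/-- The shift action `(s • x)_t = x_{s⁻¹ t}` on `Γ → A`. -/
def shiftAct {Γ A : Type*} [Group Γ] (s : Γ) (x : Γ → A) : Γ → A := fun t => x (s⁻¹ * t)

end GOE

open GOE

namespace GOEAux

open Filter Topology GOE
open scoped Pointwise

variable {Γ X : Type*} [Group Γ] [MetricSpace X] [CompactSpace X] [MulAction Γ X]

lemma unif_expansive (hact : ContAction Γ X) {κ : ℝ}
    (hexp : ∀ x y : X, x ≠ y → ∃ s : Γ, κ < dist (s • x) (s • y))
    {ε : ℝ} (hε : 0 < ε) :
    ∃ A : Finset Γ, ∀ x y : X, (∀ s ∈ A, dist (s • x) (s • y) ≤ κ) → dist x y < ε := by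
  set C : Set (X × X) := {p | ε ≤ dist p.1 p.2} with hC
  have hCc : IsCompact C := (isClosed_le continuous_const continuous_dist).isCompact
  have hopen : ∀ s : Γ, IsOpen {p : X × X | κ < dist (s • p.1) (s • p.2)} := by
    intro s
    exact isOpen_lt continuous_const
      (continuous_dist.comp (((hact s).comp continuous_fst).prodMk ((hact s).comp continuous_snd)))
  have hcov : C ⊆ ⋃ s : Γ, {p : X × X | κ < dist (s • p.1) (s • p.2)} := by
    intro p hp
    have hne : p.1 ≠ p.2 := by
      intro h
      have : ε ≤ dist p.1 p.2 := hp
      rw [h, dist_self] at this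
      linarith
    obtain ⟨s, hs⟩ := hexp p.1 p.2 hne
    exact Set.mem_iUnion.2 ⟨s, hs⟩
  obtain ⟨A, hA⟩ := hCc.elim_finite_subcover _ hopen hcov
  refine ⟨A, fun x y h => ?_⟩
  by_contra hge
  push_neg at hge
  have hmem : (x, y) ∈ C := hge
  obtain ⟨s, hsA, hs⟩ := Set.mem_iUnion₂.1 (hA hmem)
  exact absurd (h s hsA) (not_le.2 hs)

lemma unif_cont_act (hact : ContAction Γ X) (F : Finset Γ) {δ : ℝ} (hδ : 0 < δ) :
    ∃ δ' : ℝ, 0 < δ' ∧ ∀ x y : X, dist x y < δ' → ∀ f ∈ F, dist (f • x) (f • y) ≤ δ := by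
  classical
  induction F using Finset.induction with
  | empty => exact ⟨δ, hδ, fun x y _ f hf => absurd hf (Finset.notMem_empty f)⟩
  | @insert a s _ ih =>
    obtain ⟨δ₁, hδ₁, h₁⟩ := ih
    have huc := CompactSpace.uniformContinuous_of_continuous (hact a)
    rw [Metric.uniformContinuous_iff] at huc
    obtain ⟨δ₂, hδ₂, h₂⟩ := huc δ hδ
    refine ⟨min δ₁ δ₂, lt_min hδ₁ hδ₂, fun x y hxy f hf => ?_⟩
    rcases Finset.mem_insert.1 hf with rfl | hf
    · exact le_of_lt (h₂ (lt_of_lt_of_le hxy (min_le_right _ _)))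
    · exact h₁ x y (lt_of_lt_of_le hxy (min_le_left _ _)) f hf

lemma exists_approx_point [Countable Γ] [DecidableEq Γ] (hact : ContAction Γ X)
    {ε : ℝ} (Fs : Finset Γ) (hFsym : ∀ s ∈ Fs, s⁻¹ ∈ Fs)
    (hspec : ∀ (J : Type) (_ : Fintype J) (Fj : J → Finset Γ),
      (∀ i j : J, i ≠ j → ∀ f ∈ Fs, ∀ s ∈ Fj i, f * s ∉ Fj j) →
      ∀ xj : J → X, ∃ x : X, ∀ j : J, ∀ s ∈ Fj j, dist (s • x) (s • xj j) ≤ ε)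
    (B : Finset Γ) (w z : X) :
    ∃ x : X, (∀ s ∈ B, dist (s • x) (s • w) ≤ ε) ∧
      (∀ s : Γ, s ∉ B ∪ Fs * B → dist (s • x) (s • z) ≤ ε) := by
  classical
  obtain ⟨g, hg⟩ := exists_surjective_nat Γ
  set D : Finset Γ := B ∪ Fs * B with hD
  have key : ∀ m : ℕ, ∃ x : X, (∀ s ∈ B, dist (s • x) (s • w) ≤ ε) ∧
      (∀ s ∈ ((Finset.range m).image g) \ D, dist (s • x) (s • z) ≤ ε) := by
    intro m
    set C : Finset Γ := ((Finset.range m).image g) \ D with hCdef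
    have hdisj : ∀ i j : Fin 2, i ≠ j → ∀ f ∈ Fs, ∀ s ∈ (![B, C] : Fin 2 → Finset Γ) i,
        f * s ∉ (![B, C] : Fin 2 → Finset Γ) j := by
      intro i j hij f hf s hs hmem
      fin_cases i <;> fin_cases j
      · exact hij rfl
      · simp only [Matrix.cons_val_zero] at hs
        simp only [Matrix.cons_val_one, Matrix.head_cons] at hmem
        have : f * s ∈ D := Finset.mem_union.2 (Or.inr (Finset.mul_mem_mul hf hs))
        exact (Finset.mem_sdiff.1 hmem).2 this
      · simp only [Matrix.cons_val_one, Matrix.head_cons] at hs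
        simp only [Matrix.cons_val_zero] at hmem
        have hs' : s ∈ D := by
          have : s = f⁻¹ * (f * s) := by group
          rw [this]
          exact Finset.mem_union.2 (Or.inr (Finset.mul_mem_mul (hFsym f hf) hmem))
        exact (Finset.mem_sdiff.1 hs).2 hs'
      · exact hij rfl
    obtain ⟨x, hx⟩ := hspec (Fin 2) inferInstance ![B, C] hdisj ![w, z]
    refine ⟨x, fun s hs => ?_, fun s hs => ?_⟩
    · simpa using hx 0 s (by simpa using hs)
    · simpa using hx 1 s (by simpa using hs)
  choose xm hxm1 hxm2 using key
  obtain ⟨x, -, φ, hφ, hxlim⟩ := isCompact_univ.tendsto_subseq (fun m => Set.mem_univ (xm m))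
  refine ⟨x, fun s hs => ?_, fun s hs => ?_⟩
  · have hcont : Tendsto (fun k => dist (s • xm (φ k)) (s • w)) atTop
        (𝓝 (dist (s • x) (s • w))) :=
      (((hact s).dist continuous_const).tendsto x).comp hxlim
    exact le_of_tendsto hcont (Eventually.of_forall fun k => hxm1 (φ k) s hs)
  · obtain ⟨k₀, rfl⟩ := hg s
    have hcont : Tendsto (fun k => dist (g k₀ • xm (φ k)) (g k₀ • z)) atTop
        (𝓝 (dist (g k₀ • x) (g k₀ • z))) :=
      (((hact (g k₀)).dist continuous_const).tendsto x).comp hxlim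
    refine le_of_tendsto hcont ?_
    filter_upwards [eventually_ge_atTop (k₀ + 1)] with k hk
    refine hxm2 (φ k) (g k₀) (Finset.mem_sdiff.2 ⟨?_, hs⟩)
    exact Finset.mem_image.2 ⟨k₀, Finset.mem_range.2 (lt_of_lt_of_le (Nat.lt_succ_self k₀)
      (le_trans hk (hφ.le_apply))), rfl⟩

lemma exists_sep_span (hact : ContAction Γ X) (E : Finset Γ) {l : ℝ} (hl : 0 < l) :
    ∃ W : Finset X,
      (∀ x ∈ W, ∀ y ∈ W, x ≠ y → ∃ s ∈ E, l ≤ dist (s • x) (s • y)) ∧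
      (∀ x : X, ∃ w ∈ W, ∀ s ∈ E, dist (s • x) (s • w) < l) := by
  classical
  obtain ⟨δ', hδ', hδ'prop⟩ := unif_cont_act hact E (half_pos hl)
  have hcov : (Set.univ : Set X) ⊆ ⋃ y : X, Metric.ball y (δ' / 2) := by
    intro x _
    exact Set.mem_iUnion.2 ⟨x, Metric.mem_ball_self (half_pos hδ')⟩
  obtain ⟨t, ht⟩ := isCompact_univ.elim_finite_subcover _ (fun y : X => Metric.isOpen_ball) hcov
  set Sep : Finset X → Prop :=
    fun W => ∀ x ∈ W, ∀ y ∈ W, x ≠ y → ∃ s ∈ E, l ≤ dist (s • x) (s • y) with hSep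
  have hbdd : ∀ W : Finset X, Sep W → W.card ≤ t.card := by
    intro W hW
    have hc : ∀ x : X, ∃ y ∈ t, x ∈ Metric.ball y (δ' / 2) := by
      intro x
      obtain ⟨y, hy, hxy⟩ := Set.mem_iUnion₂.1 (ht (Set.mem_univ x))
      exact ⟨y, hy, hxy⟩
    choose c hc1 hc2 using hc
    refine Finset.card_le_card_of_injOn c (fun x _ => hc1 x) ?_
    intro a ha b hb hab
    by_contra hne
    obtain ⟨s, hsE, hsep⟩ := hW a ha b hb hne
    have hd : dist a b < δ' := by
      have h1 := hc2 a
      have h2 := hc2 b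
      rw [hab] at h1
      have h3 := dist_triangle a (c b) b
      have h4 : dist (c b) b = dist b (c b) := dist_comm _ _
      rw [Metric.mem_ball] at h1 h2
      linarith
    have := hδ'prop a b hd s hsE
    linarith
  set S : Set ℕ := {n | ∃ W : Finset X, Sep W ∧ W.card = n} with hS
  have hSne : S.Nonempty := ⟨0, ∅, by simp [hSep], rfl⟩
  have hSbdd : BddAbove S := ⟨t.card, fun n ⟨W, hW, hWc⟩ => hWc ▸ hbdd W hW⟩
  obtain ⟨W, hWsep, hWcard⟩ := Nat.sSup_mem hSne hSbdd
  refine ⟨W, hWsep, fun x => ?_⟩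
  by_contra hx
  push_neg at hx
  have hxW : x ∉ W := by
    intro hxW
    obtain ⟨s, hsE, hge⟩ := hx x hxW
    rw [dist_self] at hge
    linarith
  have hsep' : Sep (insert x W) := by
    intro a ha b hb hab
    rcases Finset.mem_insert.1 ha with rfl | ha' <;> rcases Finset.mem_insert.1 hb with rfl | hb'
    · exact absurd rfl hab
    · obtain ⟨s, hsE, h⟩ := hx b hb'
      exact ⟨s, hsE, h⟩
    · obtain ⟨s, hsE, h⟩ := hx a ha'
      exact ⟨s, hsE, by rwa [dist_comm]⟩
    · exact hWsep a ha' b hb' hab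
  have : (insert x W).card ∈ S := ⟨insert x W, hsep', rfl⟩
  have hle := le_csSup hSbdd this
  rw [Finset.card_insert_of_notMem hxW, hWcard] at hle
  omega

lemma exists_spanning_card [Nonempty X] (hact : ContAction Γ X) (E : Finset Γ)
    {δ : ℝ} (hδ : 0 < δ) :
    ∃ S : Finset X, S.card = spnNum Γ X Set.univ E δ ∧ 0 < S.card ∧
      ∀ x : X, ∃ p ∈ S, ∀ s ∈ E, dist (s • x) (s • p) < δ := by
  obtain ⟨W, -, hspan⟩ := exists_sep_span hact E hδ
  have hne : {n : ℕ | ∃ W' : Finset X, (↑W' : Set X) ⊆ Set.univ ∧ W'.card = n ∧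
      ∀ x ∈ (Set.univ : Set X), ∃ w ∈ W', ∀ s ∈ E, dist (s • x) (s • w) < δ}.Nonempty :=
    ⟨W.card, W, Set.subset_univ _, rfl, fun x _ => hspan x⟩
  obtain ⟨S, -, hcard, hspanS⟩ := Nat.sInf_mem hne
  refine ⟨S, hcard, ?_, fun x => hspanS x (Set.mem_univ x)⟩
  obtain ⟨p, hp, -⟩ := hspanS (Classical.arbitrary X) (Set.mem_univ _)
  exact Finset.card_pos.2 ⟨p, hp⟩

lemma covNum_le_span (U : Finset (Set X)) (hU : ∀ V ∈ U, IsOpen V)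
    (hUc : (Set.univ : Set X) ⊆ ⋃₀ (↑U : Set (Set X))) :
    ∃ l : ℝ, 0 < l ∧ ∀ (E : Finset Γ) (W : Finset X),
      (∀ x : X, ∃ w ∈ W, ∀ s ∈ E, dist (s • x) (s • w) < l) →
      covNumOn Γ X Set.univ U E ≤ W.card := by
  classical
  have hUc' : (Set.univ : Set X) ⊆ ⋃ V : {V // V ∈ U}, (V : Set X) := by
    intro x hx
    obtain ⟨V, hV, hxV⟩ := hUc hx
    exact Set.mem_iUnion.2 ⟨⟨V, hV⟩, hxV⟩
  obtain ⟨l, hl, hleb⟩ := lebesgue_number_lemma_of_metric isCompact_univ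
    (fun V : {V // V ∈ U} => hU V.1 V.2) hUc'
  have hassign : ∀ p : X, ∃ V : Set X, V ∈ U ∧ Metric.ball p l ⊆ V := by
    intro p
    obtain ⟨V, hV⟩ := hleb p (Set.mem_univ p)
    exact ⟨V.1, V.2, hV⟩
  choose V0 hV0U hV0b using hassign
  refine ⟨l, hl, fun E W hW => ?_⟩
  set f : X → Γ → Set X := fun w s => V0 (s • w) with hf
  have hmem : (W.image f).card ∈ {n : ℕ | ∃ c : Finset (Γ → Set X), c.card = n ∧
      (∀ g ∈ c, ∀ s : Γ, g s ∈ U) ∧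
      (Set.univ : Set X) ⊆ ⋃ g ∈ c, ⋂ s ∈ E, (fun x : X => s • x) ⁻¹' g s} := by
    refine ⟨W.image f, rfl, ?_, ?_⟩
    · intro g hg s
      obtain ⟨w, _, rfl⟩ := Finset.mem_image.1 hg
      exact hV0U (s • w)
    · intro x _
      obtain ⟨w, hwW, hw⟩ := hW x
      refine Set.mem_biUnion (Finset.mem_coe.2 (Finset.mem_image_of_mem f hwW)) ?_
      refine Set.mem_iInter₂.2 fun s hs => ?_
      exact hV0b (s • w) (Metric.mem_ball.2 (hw s hs))
  exact le_trans (Nat.sInf_le hmem) (Finset.card_image_le)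

variable (Γ) in
lemma spn_le_covNum [Nonempty X] {δ : ℝ} (hδ : 0 < δ) :
    ∃ U : Finset (Set X), (∀ V ∈ U, IsOpen V) ∧
      (Set.univ : Set X) ⊆ ⋃₀ (↑U : Set (Set X)) ∧
      ∀ E : Finset Γ, spnNum Γ X Set.univ E δ ≤ covNumOn Γ X Set.univ U E := by
  classical
  have hδ3 : 0 < δ / 3 := by linarith
  have hcov : (Set.univ : Set X) ⊆ ⋃ y : X, Metric.ball y (δ / 3) := by
    intro x _
    exact Set.mem_iUnion.2 ⟨x, Metric.mem_ball_self hδ3⟩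
  obtain ⟨t, ht⟩ := isCompact_univ.elim_finite_subcover _ (fun y : X => Metric.isOpen_ball) hcov
  set U : Finset (Set X) := t.image (fun y => Metric.ball y (δ / 3)) with hUdef
  have hUopen : ∀ V ∈ U, IsOpen V := by
    intro V hV
    obtain ⟨y, _, rfl⟩ := Finset.mem_image.1 hV
    exact Metric.isOpen_ball
  have htne : t.Nonempty := by
    obtain ⟨x⟩ := ‹Nonempty X›
    obtain ⟨y, hy, -⟩ := Set.mem_iUnion₂.1 (ht (Set.mem_univ x))
    exact ⟨y, hy⟩
  have hUc : (Set.univ : Set X) ⊆ ⋃₀ (↑U : Set (Set X)) := by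
    intro x hx
    obtain ⟨y, hy, hxy⟩ := Set.mem_iUnion₂.1 (ht hx)
    exact ⟨Metric.ball y (δ / 3), Finset.mem_coe.2 (Finset.mem_image_of_mem _ hy), hxy⟩
  refine ⟨U, hUopen, hUc, fun E => ?_⟩
  have hassign : ∀ p : X, ∃ V : Set X, V ∈ U ∧ p ∈ V := by
    intro p
    obtain ⟨y, hy, hpy⟩ := Set.mem_iUnion₂.1 (ht (Set.mem_univ p))
    exact ⟨Metric.ball y (δ / 3), Finset.mem_image_of_mem _ hy, hpy⟩
  choose Vm hVmU hVmmem using hassign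
  set covSet : Set ℕ := {n : ℕ | ∃ c : Finset (Γ → Set X), c.card = n ∧
      (∀ g ∈ c, ∀ s : Γ, g s ∈ U) ∧
      (Set.univ : Set X) ⊆ ⋃ g ∈ c, ⋂ s ∈ E, (fun x : X => s • x) ⁻¹' g s} with hcovSet
  have hV₀ : ∃ V₀ : Set X, V₀ ∈ U := ⟨Metric.ball htne.choose (δ / 3),
    Finset.mem_image_of_mem _ htne.choose_spec⟩
  obtain ⟨V₀, hV₀U⟩ := hV₀
  have hne : covSet.Nonempty := by
    refine ⟨_, (E.pi fun _ => U).image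
      (fun f (s : Γ) => if h : s ∈ E then f s h else V₀), rfl, ?_, ?_⟩
    · intro g hg s
      obtain ⟨f, hf, rfl⟩ := Finset.mem_image.1 hg
      by_cases h : s ∈ E
      · simpa [h] using Finset.mem_pi.1 hf s h
      · simpa [h] using hV₀U
    · intro x _
      set f : ∀ s ∈ E, Set X := fun s _ => Vm (s • x) with hfd
      have hfmem : f ∈ E.pi fun _ => U := Finset.mem_pi.2 fun s hs => hVmU (s • x)
      refine Set.mem_biUnion (Finset.mem_coe.2 (Finset.mem_image_of_mem _ hfmem)) ?_
      refine Set.mem_iInter₂.2 fun s hs => ?_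
      simp only [hs, dif_pos]
      exact hVmmem (s • x)
  have hmem := Nat.sInf_mem hne
  obtain ⟨c, hccard, hcU, hccov⟩ := hmem
  set pick : (Γ → Set X) → X := fun g =>
    if h : (⋂ s ∈ E, (fun x : X => s • x) ⁻¹' g s).Nonempty then h.choose
    else Classical.arbitrary X with hpick
  set W : Finset X := c.image pick with hW
  have hspan : ∀ x ∈ (Set.univ : Set X), ∃ w ∈ W, ∀ s ∈ E, dist (s • x) (s • w) < δ := by
    intro x hx
    obtain ⟨g, hgc, hxg⟩ := Set.mem_iUnion₂.1 (hccov hx)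
    have hcell : (⋂ s ∈ E, (fun x : X => s • x) ⁻¹' g s).Nonempty := ⟨x, hxg⟩
    refine ⟨pick g, Finset.mem_image_of_mem _ hgc, fun s hs => ?_⟩
    have hpg : pick g ∈ ⋂ s ∈ E, (fun x : X => s • x) ⁻¹' g s := by
      rw [hpick]
      simp only [hcell, dif_pos]
      exact hcell.choose_spec
    have h1 : s • x ∈ g s := Set.mem_iInter₂.1 hxg s hs
    have h2 : s • pick g ∈ g s := Set.mem_iInter₂.1 hpg s hs
    obtain ⟨y, -, hgy⟩ := Finset.mem_image.1 (hcU g hgc s)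
    rw [← hgy] at h1 h2
    rw [Metric.mem_ball] at h1 h2
    calc dist (s • x) (s • pick g) ≤ dist (s • x) y + dist y (s • pick g) := dist_triangle _ _ _
      _ < δ / 3 + δ / 3 := by rw [dist_comm y]; exact add_lt_add h1 h2
      _ ≤ δ := by linarith
  have hWmem : W.card ∈ {n : ℕ | ∃ W' : Finset X, (↑W' : Set X) ⊆ Set.univ ∧ W'.card = n ∧
      ∀ x ∈ (Set.univ : Set X), ∃ w ∈ W', ∀ s ∈ E, dist (s • x) (s • w) < δ} :=
    ⟨W, Set.subset_univ _, rfl, hspan⟩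
  calc spnNum Γ X Set.univ E δ ≤ W.card := Nat.sInf_le hWmem
    _ ≤ c.card := Finset.card_image_le
    _ = covNumOn Γ X Set.univ U E := hccard

end GOEAux

open scoped Pointwise


/-- a factor map onto a strictly smaller-entropy expansive system
fails to be injective on every homoclinic class. -/
theorem factor_not_injective_on_homoclinic_class {Γ X Y : Type*} [Group Γ] [Countable Γ]
    [MetricSpace X] [CompactSpace X] [MulAction Γ X]
    [MetricSpace Y] [CompactSpace Y] [MulAction Γ Y]
    (hactX : ContAction Γ X) (hactY : ContAction Γ Y)
    (F : ℕ → Finset Γ) (hF : IsFolner Γ F)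
    (hexpX : Expansive Γ X) (hws : WeakSpec Γ X) (hexpY : Expansive Γ Y)
    (T : X → Y) (hTc : Continuous T) (hTsurj : Function.Surjective T)
    (hTequiv : ∀ (s : Γ) (x : X), T (s • x) = s • T x)
    (hent : topEntOn Γ Y Set.univ F < topEntOn Γ X Set.univ F)
    (z : X) :
    ∃ x₁ x₂ : X, Homoclinic Γ x₁ z ∧ Homoclinic Γ x₂ z ∧ x₁ ≠ x₂ ∧ T x₁ = T x₂ := by
  classical
  have hXne : Nonempty X := ⟨z⟩
  have hYne : Nonempty Y := ⟨T z⟩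
  obtain ⟨κX, hκX, hexpX'⟩ := hexpX
  obtain ⟨κY, hκY, hexpY'⟩ := hexpY
  -- Step 1: choose a cover `U` of `X` witnessing entropy above `topEntOn Y`.
  have hXU : ∃ U : Finset (Set X), ((∀ V ∈ U, IsOpen V) ∧
      Set.univ ⊆ ⋃₀ (↑U : Set (Set X))) ∧
      topEntOn Γ Y Set.univ F <
        Filter.limsup (fun n =>
          ((Real.log (covNumOn Γ X Set.univ U (F n)) / (F n).card : ℝ) : EReal))
          Filter.atTop := by
    by_contra h
    push_neg at h
    have hle : topEntOn Γ X Set.univ F ≤ topEntOn Γ Y Set.univ F :=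
      iSup_le fun U => iSup_le fun hU => h U hU
    exact absurd hent (not_lt.2 hle)
  obtain ⟨U, ⟨hUopen, hUcov⟩, hUgt⟩ := hXU
  obtain ⟨l, hl, hcovspan⟩ := GOEAux.covNum_le_span (Γ := Γ) U hUopen hUcov
  -- uniform continuity of T
  have hTuc := CompactSpace.uniformContinuous_of_continuous hTc
  rw [Metric.uniformContinuous_iff] at hTuc
  obtain ⟨δT, hδT, hTprop⟩ := hTuc (κY / 2) (by linarith)
  -- the approximation scale
  set ε : ℝ := min (l / 3) (min κX (δT / 2)) with hεdef
  have hεpos : 0 < ε := lt_min (by linarith) (lt_min hκX (by linarith))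
  have hεl : ε ≤ l / 3 := min_le_left _ _
  have hεκX : ε ≤ κX := le_trans (min_le_right _ _) (min_le_left _ _)
  have hεδT : ε < δT :=
    lt_of_le_of_lt (le_trans (min_le_right _ _) (min_le_right _ _)) (by linarith)
  -- weak specification data
  obtain ⟨Fs, hFsne, hFssym, hspec⟩ := hws ε hεpos
  -- uniform continuity of the action of elements of Fs on Y
  obtain ⟨δ₀, hδ₀, hδ₀prop⟩ := GOEAux.unif_cont_act hactY Fs (δ := κY / 2) (by linarith)
  set δ₂ : ℝ := min δ₀ (κY / 2) with hδ₂def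
  have hδ₂pos : 0 < δ₂ := lt_min hδ₀ (by linarith)
  -- Step 2: the entropy chain for Y
  obtain ⟨UY, hUYopen, hUYcov, hUYle⟩ := GOEAux.spn_le_covNum Γ (X := Y) hδ₂pos
  have hcardpos : ∀ n, (0 : ℝ) < ((F n).card : ℝ) := fun n => by
    exact_mod_cast (hF.1 n).card_pos
  have hspnpos : ∀ E : Finset Γ, 0 < spnNum Γ Y Set.univ E δ₂ := by
    intro E
    obtain ⟨S, hScard, hSpos, -⟩ := GOEAux.exists_spanning_card hactY E hδ₂pos
    omega
  have hptwise : ∀ n,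
      ((Real.log (spnNum Γ Y Set.univ (F n) δ₂) / (F n).card : ℝ) : EReal) ≤
      ((Real.log (covNumOn Γ Y Set.univ UY (F n)) / (F n).card : ℝ) : EReal) := by
    intro n
    rw [EReal.coe_le_coe_iff]
    have h1 : (0 : ℝ) < (spnNum Γ Y Set.univ (F n) δ₂ : ℝ) := by
      exact_mod_cast hspnpos (F n)
    have h2 : ((spnNum Γ Y Set.univ (F n) δ₂ : ℕ) : ℝ) ≤
        ((covNumOn Γ Y Set.univ UY (F n) : ℕ) : ℝ) := by
      exact_mod_cast hUYle (F n)
    exact (div_le_div_iff_of_pos_right (hcardpos n)).2 (Real.log_le_log h1 h2)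
  have hchain : Filter.limsup (fun n =>
      ((Real.log (spnNum Γ Y Set.univ (F n) δ₂) / (F n).card : ℝ) : EReal))
      Filter.atTop ≤ topEntOn Γ Y Set.univ F := by
    refine le_trans (Filter.limsup_le_limsup (Filter.Eventually.of_forall hptwise)) ?_
    exact le_iSup_of_le UY (le_iSup_of_le ⟨hUYopen, hUYcov⟩ le_rfl)
  -- Step 3: find a good n
  obtain ⟨r, hr1, hr2⟩ := EReal.exists_between_coe_real hUgt
  have hev : ∀ᶠ n in Filter.atTop,
      ((Real.log (spnNum Γ Y Set.univ (F n) δ₂) / (F n).card : ℝ) : EReal) < (r : EReal) :=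
    Filter.eventually_lt_of_limsup_lt (lt_of_le_of_lt hchain hr1)
  have hfreq : ∃ᶠ n in Filter.atTop, (r : EReal) <
      ((Real.log (covNumOn Γ X Set.univ U (F n)) / (F n).card : ℝ) : EReal) :=
    Filter.frequently_lt_of_lt_limsup (by isBoundedDefault) hr2
  obtain ⟨n, hn1, hn2⟩ := (hfreq.and_eventually hev).exists
  rw [EReal.coe_lt_coe_iff] at hn1 hn2
  have hlt_nat : spnNum Γ Y Set.univ (F n) δ₂ < covNumOn Γ X Set.univ U (F n) := by
    by_contra hge
    push_neg at hge
    have hlog : Real.log (covNumOn Γ X Set.univ U (F n)) ≤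
        Real.log (spnNum Γ Y Set.univ (F n) δ₂) := by
      rcases Nat.eq_zero_or_pos (covNumOn Γ X Set.univ U (F n)) with h0 | hpos
      · rw [h0]
        simpa using Real.log_nonneg (by exact_mod_cast hspnpos (F n))
      · exact Real.log_le_log (by exact_mod_cast hpos) (by exact_mod_cast hge)
    have := (div_lt_div_iff_of_pos_right (hcardpos n)).1 (lt_trans hn2 hn1)
    linarith
  -- Step 4: separated/spanning configurations at stage n
  obtain ⟨W, hWsep, hWspan⟩ := GOEAux.exists_sep_span hactX (F n) hl
  have hcovW : covNumOn Γ X Set.univ U (F n) ≤ W.card := hcovspan (F n) W hWspan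
  obtain ⟨S, hScard, -, hSspan⟩ := GOEAux.exists_spanning_card hactY (F n) hδ₂pos
  -- approximate points homoclinic to z
  have hax : ∀ w : X, ∃ x : X, (∀ s ∈ F n, dist (s • x) (s • w) ≤ ε) ∧
      (∀ s : Γ, s ∉ F n ∪ Fs * F n → dist (s • x) (s • z) ≤ ε) :=
    fun w => GOEAux.exists_approx_point hactX Fs hFssym hspec (F n) w z
  choose xw hxw1 hxw2 using hax
  choose P hP1 hP2 using hSspan
  -- all xw w are homoclinic to z
  have homocl : ∀ w : X, Homoclinic Γ (xw w) z := by
    intro w η hη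
    obtain ⟨A, hA⟩ := GOEAux.unif_expansive hactX hexpX' hη
    refine ⟨(A.image (·⁻¹)) * (F n ∪ Fs * F n), fun t ht => ?_⟩
    refine hA _ _ fun s hs => ?_
    rw [smul_smul, smul_smul]
    refine le_trans (hxw2 w (s * t) ?_) hεκX
    intro hmem
    apply ht
    have : t = s⁻¹ * (s * t) := by group
    rw [this]
    exact Finset.mul_mem_mul (Finset.mem_image_of_mem _ hs) hmem
  -- pigeonhole
  have hmaps : ∀ w ∈ W, P (T (xw w)) ∈ S := fun w _ => hP1 _
  have hcardlt : S.card < W.card := by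
    rw [hScard]
    exact lt_of_lt_of_le hlt_nat hcovW
  obtain ⟨w₁, hw₁, w₂, hw₂, hwne, heq⟩ :=
    Finset.exists_ne_map_eq_of_card_lt_of_maps_to hcardlt hmaps
  refine ⟨xw w₁, xw w₂, homocl w₁, homocl w₂, ?_, ?_⟩
  · -- xw w₁ ≠ xw w₂
    obtain ⟨s, hsF, hsep⟩ := hWsep w₁ hw₁ w₂ hw₂ hwne
    intro hxeq
    have h1 : dist (s • w₁) (s • xw w₁) ≤ ε := by
      rw [dist_comm]; exact hxw1 w₁ s hsF
    have h2 : dist (s • xw w₁) (s • w₂) ≤ ε := by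
      rw [hxeq]; exact hxw1 w₂ s hsF
    have h3 := dist_triangle (s • w₁) (s • xw w₁) (s • w₂)
    linarith
  · -- T (xw w₁) = T (xw w₂)
    by_contra hTne
    obtain ⟨τ, hτ⟩ := hexpY' (T (xw w₁)) (T (xw w₂)) hTne
    have hle : dist (τ • T (xw w₁)) (τ • T (xw w₂)) ≤ κY := by
      by_cases hτD : τ ∈ F n ∪ Fs * F n
      · set p : Y := P (T (xw w₁)) with hpdef
        have hhalf : ∀ y : Y, P y = p → dist (τ • y) (τ • p) ≤ κY / 2 := by
          intro y hy
          rcases Finset.mem_union.1 hτD with hτF | hτM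
          · have hd := hP2 y τ hτF
            rw [hy] at hd
            exact hd.le.trans (min_le_right _ _)
          · obtain ⟨f, hf, t, htF, rfl⟩ := Finset.mem_mul.1 hτM
            rw [mul_smul, mul_smul]
            refine hδ₀prop _ _ ?_ f hf
            have hd := hP2 y t htF
            rw [hy] at hd
            exact lt_of_lt_of_le hd (min_le_left _ _)
        have h1 := hhalf (T (xw w₁)) rfl
        have h2 := hhalf (T (xw w₂)) heq.symm
        have h3 := dist_triangle (τ • T (xw w₁)) (τ • p) (τ • T (xw w₂))
        have h4 : dist (τ • p) (τ • T (xw w₂)) = dist (τ • T (xw w₂)) (τ • p) :=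
          dist_comm _ _
        linarith
      · have hout : ∀ v : X, dist (τ • T (xw v)) (τ • T z) ≤ κY / 2 := by
          intro v
          rw [← hTequiv τ (xw v), ← hTequiv τ z]
          exact (hTprop (lt_of_le_of_lt (hxw2 v τ hτD) hεδT)).le
        have h1 := hout w₁
        have h2 := hout w₂
        have h3 := dist_triangle (τ • T (xw w₁)) (τ • T z) (τ • T (xw w₂))
        have h4 : dist (τ • T z) (τ • T (xw w₂)) = dist (τ • T (xw w₂)) (τ • T z) :=
          dist_comm _ _
        linarith
    exact absurd hle (not_le.2 hτ)
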